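/- Let q > 1 be real, g a positive integer, and λ₁,…,λ_{2g} ∈ ℂ with |λ_j| = √q for all j, satisfying the functional-equation identity ∏_{j=1}^{2g}(1 − λ_j) = q^g · ∏_{j=1}^{2g}(1 − λ_j/q). Let M_n be the n-th Taylor coefficient at 0 of ∏_{j=1}^{2g}(1 − λ_j w)/((1−w)(1−qw)). Then for every integer n > 2g − 2: M_n = (q/(q−1)) · L(1/q) · (qⁿ − q^{g−1}), where L(1/q) = ∏_{j=1}^{2g}(1 − λ_j/q). -/

import Mathlib

open FormalMultilinearSeries in
lemma coeff_unique_aux {r : ℝ} (hr : 0 < r) (f : ℂ → ℂ) (a b : ℕ → ℂ)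
    (ha : ∀ w : ℂ, ‖w‖ < r → HasSum (fun n => a n * w ^ n) (f w))
    (hb : ∀ w : ℂ, ‖w‖ < r → HasSum (fun n => b n * w ^ n) (f w)) : a = b := by
  set r' : NNReal := ⟨r / 2, by positivity⟩ with hr'
  have hr'r : (r' : ℝ) < r := by show r / 2 < r; linarith
  have hr'pos : (0:ℝ) < r' := by show (0:ℝ) < r / 2; linarith
  have key : ∀ c : ℕ → ℂ, (∀ w : ℂ, ‖w‖ < r → HasSum (fun n => c n * w ^ n) (f w)) →
      HasFPowerSeriesOnBall f (ofScalars ℂ c) 0 r' := by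
    intro c hc
    have hnorm : ‖((r' : ℝ) : ℂ)‖ = (r' : ℝ) := by
      simp [Complex.norm_real, abs_of_nonneg hr'pos.le]
    have hsum : HasSum (fun n => c n * ((r' : ℝ) : ℂ) ^ n) (f ((r' : ℝ) : ℂ)) :=
      hc _ (by rw [hnorm]; exact hr'r)
    refine ⟨?_, ENNReal.coe_pos.mpr (by exact_mod_cast hr'pos), ?_⟩
    · apply le_radius_of_tendsto (l := 0)
      have h0 : Filter.Tendsto (fun n => c n * ((r' : ℝ) : ℂ) ^ n) Filter.atTop (nhds 0) :=
        hsum.summable.tendsto_atTop_zero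
      have := h0.norm
      simp only [norm_zero] at this
      convert this using 2 with n
      rw [ofScalars_norm, norm_mul, norm_pow, hnorm]
    · intro y hy
      have hy' : ‖y‖ < r := by
        rw [EMetric.mem_ball, edist_zero_right] at hy
        have : ‖y‖₊ < r' := by exact_mod_cast hy
        exact lt_trans this hr'r
      simp only [ofScalars_apply_eq, smul_eq_mul, zero_add]
      exact hc y hy'
  have heq := ((key a ha).hasFPowerSeriesAt).eq_formalMultilinearSeries
    ((key b hb).hasFPowerSeriesAt)
  exact ofScalars_series_injective ℂ ℂ heq

lemma poly_hasSum (p : Polynomial ℂ) (w : ℂ) :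
    HasSum (fun n => p.coeff n * w ^ n) (p.eval w) := by
  rw [Polynomial.eval_eq_sum_range]
  exact hasSum_sum_of_ne_finset_zero fun n hn => by
    rw [p.coeff_eq_zero_of_natDegree_lt (by simpa using (Finset.mem_range.not.mp hn)), zero_mul]

/-- Exact formula for the Taylor coefficients `Mₙ` of
`Z₁(w) = ∏ⱼ (1 − λⱼ w)/((1−w)(1−qw))` for `n > 2g−2`, given `|λⱼ| = √q` and the
functional-equation identity `∏ⱼ(1−λⱼ) = q^g ∏ⱼ(1−λⱼ/q)`:
`Mₙ = (q/(q−1)) · L(1/q) · (qⁿ − q^(g−1))`. -/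
theorem stmt_9 (q : ℝ) (hq : 1 < q) (g : ℕ) (hg : 0 < g)
    (lam : Fin (2 * g) → ℂ) (hlam : ∀ j, ‖lam j‖ = Real.sqrt q)
    (hfe : ∏ j, (1 - lam j) = (q : ℂ) ^ g * ∏ j, (1 - lam j / (q : ℂ)))
    (M : ℕ → ℂ)
    (hM : ∀ w : ℂ, ‖w‖ < 1 / q → HasSum (fun n : ℕ => M n * w ^ n)
      ((∏ j, (1 - lam j * w)) / ((1 - w) * (1 - (q : ℂ) * w))))
    (n : ℕ) (hn : 2 * g - 2 < n) :
    M n = ((q : ℂ) / ((q : ℂ) - 1)) * (∏ j, (1 - lam j / (q : ℂ))) *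
      ((q : ℂ) ^ n - (q : ℂ) ^ (g - 1)) := by
  set qc : ℂ := (q : ℂ) with hqc
  have hq0 : (0:ℝ) < q := by linarith
  have hqc0 : qc ≠ 0 := by
    simp only [hqc, ne_eq, Complex.ofReal_eq_zero]; exact hq0.ne'
  have hqc1 : qc ≠ 1 := by
    simp only [hqc, ne_eq]
    exact_mod_cast hq.ne'
  have hsub : (1 : ℂ) - qc ≠ 0 := fun h => hqc1 (by linear_combination -h)
  have hsub' : (1 : ℂ) - qc⁻¹ ≠ 0 := by
    intro h
    have : qc⁻¹ = 1 := by linear_combination -h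
    have : qc = 1 := by
      field_simp at this; simpa using this.symm
    exact hqc1 this
  classical
  set L : Polynomial ℂ := ∏ j, (1 - Polynomial.C (lam j) * Polynomial.X) with hL
  have hLeval : ∀ x : ℂ, L.eval x = ∏ j, (1 - lam j * x) := by
    intro x; simp [hL, Polynomial.eval_prod]
  set Lq : ℂ := ∏ j, (1 - lam j / qc) with hLq
  have hLq' : L.eval qc⁻¹ = Lq := by
    rw [hLeval, hLq]
    exact Finset.prod_congr rfl fun j _ => by rw [div_eq_mul_inv]
  set α : ℂ := (∏ j, (1 - lam j)) / (1 - qc) with hα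
  set β : ℂ := Lq / (1 - qc⁻¹) with hβ
  set R : Polynomial ℂ := Polynomial.C α * (1 - Polynomial.C qc * Polynomial.X)
    + Polynomial.C β * (1 - Polynomial.X) with hR
  set d : Polynomial ℂ := (Polynomial.X - Polynomial.C 1) * (Polynomial.X - Polynomial.C qc⁻¹)
    with hd
  have hdvd : d ∣ L - R := by
    have hcop : IsCoprime (Polynomial.X - Polynomial.C (1:ℂ))
        (Polynomial.X - Polynomial.C qc⁻¹) := by
      apply Polynomial.isCoprime_X_sub_C_of_isUnit_sub
      refine (sub_ne_zero.mpr ?_).isUnit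
      intro h
      apply hsub'
      rw [← h]; ring
    refine (hcop.mul_dvd ?_ ?_)
    · rw [Polynomial.dvd_iff_isRoot, Polynomial.IsRoot]
      simp only [Polynomial.eval_sub]
      rw [hLeval, hR]
      simp only [Polynomial.eval_add, Polynomial.eval_mul, Polynomial.eval_C,
        Polynomial.eval_sub, Polynomial.eval_one, Polynomial.eval_X]
      simp only [mul_one]
      rw [hα, div_mul_cancel₀ _ hsub]
      ring
    · rw [Polynomial.dvd_iff_isRoot, Polynomial.IsRoot]
      simp only [Polynomial.eval_sub]
      rw [hLq', hR]
      simp only [Polynomial.eval_add, Polynomial.eval_mul, Polynomial.eval_C,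
        Polynomial.eval_sub, Polynomial.eval_one, Polynomial.eval_X]
      rw [hβ, mul_inv_cancel₀ hqc0, div_mul_cancel₀ _ hsub']
      ring
  obtain ⟨Q, hQ⟩ := hdvd
  -- degree bound
  have hdne : d ≠ 0 := by
    rw [hd]
    exact mul_ne_zero (Polynomial.X_sub_C_ne_zero 1) (Polynomial.X_sub_C_ne_zero _)
  have hQdeg : Q.natDegree ≤ 2 * g - 2 := by
    rcases eq_or_ne Q 0 with h0 | h0
    · simp [h0]
    have hfac : ∀ (a : ℂ), (1 - Polynomial.C a * Polynomial.X).natDegree ≤ 1 := by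
      intro a
      refine le_trans (Polynomial.natDegree_sub_le _ _) (max_le (by simp) ?_)
      exact le_trans (Polynomial.natDegree_C_mul_le _ _) (by simp)
    have hRdeg : R.natDegree ≤ 1 := by
      rw [hR]
      refine le_trans (Polynomial.natDegree_add_le _ _) (max_le ?_ ?_)
      · exact le_trans (Polynomial.natDegree_C_mul_le _ _) (hfac qc)
      · refine le_trans (Polynomial.natDegree_C_mul_le _ _) ?_
        exact le_trans (Polynomial.natDegree_sub_le _ _) (max_le (by simp) (by simp))
    have hLdeg : L.natDegree ≤ 2 * g := by
      rw [hL]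
      refine le_trans (Polynomial.natDegree_prod_le _ _) ?_
      exact le_trans (Finset.sum_le_card_nsmul _ _ 1 fun j _ => hfac (lam j)) (by simp)
    have hLRdeg : (L - R).natDegree ≤ 2 * g :=
      le_trans (Polynomial.natDegree_sub_le _ _) (max_le hLdeg (le_trans hRdeg (by omega)))
    have hddeg : d.natDegree = 2 := by
      rw [hd, Polynomial.natDegree_mul (Polynomial.X_sub_C_ne_zero 1)
        (Polynomial.X_sub_C_ne_zero _), Polynomial.natDegree_X_sub_C,
        Polynomial.natDegree_X_sub_C]
    have : (L - R).natDegree = 2 + Q.natDegree := by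
      rw [hQ, Polynomial.natDegree_mul hdne h0, hddeg]
    omega
  -- candidate coefficients
  set c : ℕ → ℂ := fun m => qc⁻¹ * Q.coeff m + α + β * qc ^ m with hc
  have hr : (0:ℝ) < 1 / q := by positivity
  have hq1R : 1 / q < 1 := by
    rw [div_lt_one hq0]; exact hq
  have hcsum : ∀ w : ℂ, ‖w‖ < 1 / q → HasSum (fun m : ℕ => c m * w ^ m)
      ((∏ j, (1 - lam j * w)) / ((1 - w) * (1 - qc * w))) := by
    intro w hw
    have hw1 : ‖w‖ < 1 := lt_trans hw hq1R
    have hwq : ‖qc * w‖ < 1 := by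
      rw [norm_mul, hqc, Complex.norm_real, Real.norm_of_nonneg hq0.le]
      calc q * ‖w‖ < q * (1 / q) := by
            exact mul_lt_mul_of_pos_left hw hq0
        _ = 1 := by field_simp
    have hw1' : (1 : ℂ) - w ≠ 0 := by
      intro h
      have : w = 1 := by linear_combination -h
      rw [this] at hw1; simp at hw1
    have hwq' : (1 : ℂ) - qc * w ≠ 0 := by
      intro h
      have : qc * w = 1 := by linear_combination -h
      rw [this] at hwq; simp at hwq
    have h1 := (poly_hasSum Q w).mul_left qc⁻¹
    have h2 := (hasSum_geometric_of_norm_lt_one hw1).mul_left α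
    have h3 := (hasSum_geometric_of_norm_lt_one hwq).mul_left β
    have hcomb := (h1.add h2).add h3
    have hfun : (fun m : ℕ => qc⁻¹ * (Q.coeff m * w ^ m) + α * w ^ m + β * (qc * w) ^ m)
        = fun m : ℕ => c m * w ^ m := by
      funext m
      rw [hc]; simp only [mul_pow]; ring
    rw [hfun] at hcomb
    convert hcomb using 1
    · rfl
    -- value equality
    have heval : L.eval w = R.eval w + d.eval w * Q.eval w := by
      have h := congrArg (Polynomial.eval w) hQ
      simp only [Polynomial.eval_sub, Polynomial.eval_mul] at h
      linear_combination h
    rw [← hLeval w, heval, hR, hd]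
    simp only [Polynomial.eval_add, Polynomial.eval_mul, Polynomial.eval_C,
      Polynomial.eval_sub, Polynomial.eval_one, Polynomial.eval_X]
    field_simp
    ring
  have hMc : M = c := coeff_unique_aux hr _ M c hM hcsum
  have hQn : Q.coeff n = 0 := Polynomial.coeff_eq_zero_of_natDegree_lt (by omega)
  have : M n = α + β * qc ^ n := by
    rw [hMc, hc]; simp [hQn]
  rw [this, hα, hβ, hfe]
  have hgg : qc ^ g = qc ^ (g - 1) * qc := by
    conv_lhs => rw [show g = (g - 1) + 1 by omega]
    rw [pow_succ]
  rw [hgg]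
  have hqm1 : qc - 1 ≠ 0 := sub_ne_zero.mpr hqc1
  field_simp
  ring
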